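/- Let M ∈ ℝ^{n×n} be Hurwitz and D ∈ ℝ^{n×n} be symmetric positive definite, and let W be the solution of the Lyapunov equation MᵀW + WM + D = 0. Then W is symmetric positive definite, the matrix Y := W⁻¹ satisfies the Riccati-type equation Y·Mᵀ + M·Y + Y·D·Y = 0, and every eigenvalue of M + W⁻¹D (over ℂ) has positive real part. -/

import Mathlib

open Matrix MeasureTheory Filter Topology
open scoped ENNReal NNReal

section Aux
attribute [local instance] Matrix.linftyOpNormedRing Matrix.linftyOpNormedAlgebra
  Matrix.linftyOpNormedAddCommGroup

lemma entry_nnnorm_le {n : ℕ} (M : Matrix (Fin n) (Fin n) ℂ) (i j : Fin n) :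
    ‖M i j‖₊ ≤ ‖M‖₊ := by
  rw [Matrix.linfty_opNNNorm_def]
  exact le_trans (Finset.single_le_sum (f := fun k => ‖M i k‖₊) (fun _ _ => zero_le)
    (Finset.mem_univ j)) (Finset.le_sup (f := fun r => ∑ k, ‖M r k‖₊) (Finset.mem_univ i))

lemma pow_entry_tendsto_real {n : ℕ} (A : Matrix (Fin n) (Fin n) ℝ)
    (h : ∀ μ ∈ spectrum ℂ (A.map (Complex.ofReal ·)), ‖μ‖₊ < 1) (i j : Fin n) :
    Tendsto (fun N => (A ^ N) i j) atTop (𝓝 0) := by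
  set Ac : Matrix (Fin n) (Fin n) ℂ := A.map (Complex.ofReal ·) with hAc
  haveI : Nontrivial (Matrix (Fin n) (Fin n) ℂ) := by
    refine ⟨1, 0, fun hc => ?_⟩
    have := congrFun (congrFun hc i) i
    simp [Matrix.one_apply_eq] at this
  have hρ : spectralRadius ℂ Ac < 1 := by
    simpa using spectrum.spectralRadius_lt_of_forall_lt Ac h
  obtain ⟨c, hc1, hc2⟩ := exists_between hρ
  have hctop : c ≠ ⊤ := (hc2.trans (by norm_num)).ne
  have hev : ∀ᶠ N : ℕ in atTop, (‖Ac ^ N‖₊ : ℝ≥0∞) ^ (1 / (N : ℝ)) < c :=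
    (spectrum.pow_nnnorm_pow_one_div_tendsto_nhds_spectralRadius Ac).eventually_lt_const hc1
  have hbound : ∀ᶠ N in atTop, ‖Ac ^ N‖ ≤ c.toReal ^ N := by
    filter_upwards [hev, eventually_ge_atTop 1] with N hN hN1
    have hNne : (N : ℝ) ≠ 0 := Nat.cast_ne_zero.mpr (by omega)
    have h1' : (‖Ac ^ N‖₊ : ℝ≥0∞) ≤ c ^ N := by
      calc (‖Ac ^ N‖₊ : ℝ≥0∞) = ((‖Ac ^ N‖₊ : ℝ≥0∞) ^ (1 / (N : ℝ))) ^ (N : ℝ) := by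
            rw [← ENNReal.rpow_mul, one_div_mul_cancel hNne, ENNReal.rpow_one]
        _ ≤ c ^ (N : ℝ) := ENNReal.rpow_le_rpow hN.le (by positivity)
        _ = c ^ N := ENNReal.rpow_natCast c N
    have h2' := ENNReal.toReal_mono (ENNReal.pow_ne_top hctop) h1'
    simpa [ENNReal.toReal_pow] using h2'
  have hsq : ∀ᶠ N in atTop, |(A ^ N) i j| ≤ c.toReal ^ N := by
    filter_upwards [hbound] with N hN
    have hmap : Ac ^ N = (A ^ N).map (Complex.ofReal ·) := by
      rw [hAc]
      exact (map_pow (Complex.ofRealHom.mapMatrix) A N).symm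
    have h2 : ‖(Ac ^ N) i j‖ ≤ ‖Ac ^ N‖ := by
      exact_mod_cast NNReal.coe_le_coe.2 (entry_nnnorm_le (Ac ^ N) i j)
    have hentry : (Ac ^ N) i j = ((A ^ N) i j : ℂ) := by rw [hmap]; rfl
    calc |(A ^ N) i j| = ‖(Ac ^ N) i j‖ := by
          rw [hentry, Complex.norm_real, Real.norm_eq_abs]
      _ ≤ ‖Ac ^ N‖ := h2
      _ ≤ c.toReal ^ N := hN
  have hc1' : c.toReal < 1 := by
    rw [← ENNReal.toReal_one]
    exact ENNReal.toReal_strict_mono (by norm_num) hc2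
  have htends : Tendsto (fun N => |(A ^ N) i j|) atTop (𝓝 0) :=
    squeeze_zero' (Eventually.of_forall fun _ => abs_nonneg _) hsq
      (tendsto_pow_atTop_nhds_zero_of_lt_one ENNReal.toReal_nonneg hc1')
  exact (tendsto_zero_iff_abs_tendsto_zero _).2 htends

end Aux


lemma mem_spec_iff_det {n : ℕ} (X : Matrix (Fin n) (Fin n) ℂ) (μ : ℂ) :
    μ ∈ spectrum ℂ X ↔ (μ • (1 : Matrix (Fin n) (Fin n) ℂ) - X).det = 0 := by
  rw [spectrum.mem_iff, Matrix.isUnit_iff_isUnit_det, isUnit_iff_ne_zero, not_ne_iff,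
    Algebra.algebraMap_eq_smul_one]


/-- Spectral (ℓ² operator) norm of a real matrix. -/
noncomputable def specNorm {p q : Type*} [Fintype p] [Fintype q] [DecidableEq q]
    (M : Matrix p q ℝ) : ℝ :=
  ‖LinearMap.toContinuousLinearMap (Matrix.toEuclideanLin M)‖

/-- A real square matrix is Hurwitz if all of its eigenvalues over ℂ have negative real part. -/
def IsHurwitz {k : Type*} [Fintype k] [DecidableEq k] (M : Matrix k k ℝ) : Prop :=
  ∀ μ ∈ spectrum ℂ (M.map (Complex.ofReal ·)), μ.re < 0

/-- Smallest (real) eigenvalue of a real matrix. -/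
noncomputable def lamMin {k : Type*} [Fintype k] [DecidableEq k] (X : Matrix k k ℝ) : ℝ :=
  sInf (spectrum ℝ X)

/-- Largest (real) eigenvalue of a real matrix. -/
noncomputable def lamMax {k : Type*} [Fintype k] [DecidableEq k] (X : Matrix k k ℝ) : ℝ :=
  sSup (spectrum ℝ X)

/-- the inverse of a Lyapunov solution solves a Riccati-type equation,
and the stabilizing-type spectral property holds. -/
lemma conj_step {n : ℕ} (A W E : Matrix (Fin n) (Fin n) ℝ) (N : ℕ) :
    (A ^ N)ᵀ * (Aᵀ * W * A + E) * A ^ N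
      = (A ^ (N + 1))ᵀ * W * A ^ (N + 1) + (A ^ N)ᵀ * E * A ^ N := by
  rw [pow_succ' A N, Matrix.transpose_mul, Matrix.mul_add, Matrix.add_mul]
  congr 1
  simp only [Matrix.mul_assoc]

lemma entry_formula {n : ℕ} (B W : Matrix (Fin n) (Fin n) ℝ) (p q : Fin n) :
    (Bᵀ * W * B) p q = ∑ l, (∑ k, B k p * W k l) * B l q := by
  simp [Matrix.mul_apply, Matrix.transpose_apply, Finset.sum_mul]

lemma conj_sym {n : ℕ} (B E : Matrix (Fin n) (Fin n) ℝ) (hE : Eᵀ = E) :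
    (Bᵀ * E * B)ᵀ = Bᵀ * E * B := by
  rw [Matrix.transpose_mul, Matrix.transpose_mul, hE, Matrix.transpose_transpose,
    Matrix.mul_assoc]

theorem stmt_6 {n : ℕ} (M D : Matrix (Fin n) (Fin n) ℝ)
    (hM : IsHurwitz M) (hD : D.PosDef)
    (W : Matrix (Fin n) (Fin n) ℝ) (hW : Mᵀ * W + W * M + D = 0) :
    W.PosDef ∧
      W⁻¹ * Mᵀ + M * W⁻¹ + W⁻¹ * D * W⁻¹ = 0 ∧
      (∀ μ ∈ spectrum ℂ ((M + W⁻¹ * D).map (Complex.ofReal ·)), 0 < μ.re) := by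
  have hMW : Mᵀ * W + W * M = -D := eq_neg_of_add_eq_zero_left hW
  -- complexification tools
  have hmapc : ∀ X : Matrix (Fin n) (Fin n) ℝ,
      X.map (Complex.ofReal ·) = Complex.ofRealHom.mapMatrix X := fun _ => rfl
  -- 1 - M is invertible
  have h1spec : (1 : ℂ) ∉ spectrum ℂ (M.map (Complex.ofReal ·)) := fun hc => by
    have := hM 1 hc; norm_num at this
  have hdet1c : (1 - M.map (Complex.ofReal ·)).det ≠ 0 := by
    rw [mem_spec_iff_det, one_smul] at h1spec
    exact h1spec
  have h1u : IsUnit (1 - M).det := by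
    rw [isUnit_iff_ne_zero]
    intro h0
    apply hdet1c
    have : ((1 - M).map (Complex.ofReal ·)).det = 0 := by
      rw [hmapc, ← RingHom.map_det, h0, map_zero]
    rw [hmapc, _root_.map_sub, _root_.map_one] at this
    exact this
  set C : Matrix (Fin n) (Fin n) ℝ := (1 - M)⁻¹ with hCdef
  have hC1 : (1 - M) * C = 1 := Matrix.mul_nonsing_inv _ h1u
  have hC2 : C * (1 - M) = 1 := Matrix.nonsing_inv_mul _ h1u
  set A : Matrix (Fin n) (Fin n) ℝ := (1 + M) * C with hAdef
  have hAt : Aᵀ = Cᵀ * (1 + Mᵀ) := by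
    rw [hAdef, Matrix.transpose_mul, Matrix.transpose_add, Matrix.transpose_one]
  have hCt1 : Cᵀ * (1 - Mᵀ) = 1 := by
    have := congrArg Matrix.transpose hC1
    rwa [Matrix.transpose_mul, Matrix.transpose_sub, Matrix.transpose_one] at this
  have hCt2 : (1 - Mᵀ) * Cᵀ = 1 := by
    have := congrArg Matrix.transpose hC2
    rwa [Matrix.transpose_mul, Matrix.transpose_sub, Matrix.transpose_one] at this
  set E : Matrix (Fin n) (Fin n) ℝ := Cᵀ * (D + D) * C with hEdef
  -- discrete Lyapunov identity
  have hinner : (1 + Mᵀ) * W * (1 + M) + (D + D) = (1 - Mᵀ) * W * (1 - M) := by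
    have h2 : (1 + Mᵀ) * W * (1 + M) - (1 - Mᵀ) * W * (1 - M)
        = (Mᵀ * W + W * M) + (Mᵀ * W + W * M) := by noncomm_ring
    rw [hMW] at h2
    have h3 := sub_eq_iff_eq_add.mp h2
    rw [h3]; abel
  have hlyap : W = Aᵀ * W * A + E := by
    have e1 : W = Cᵀ * ((1 - Mᵀ) * W * (1 - M)) * C := by
      have : Cᵀ * ((1 - Mᵀ) * W * (1 - M)) * C
          = (Cᵀ * (1 - Mᵀ)) * W * ((1 - M) * C) := by
        simp only [Matrix.mul_assoc]
      rw [this, hCt1, hC1, Matrix.one_mul, Matrix.mul_one]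
    calc W = Cᵀ * ((1 - Mᵀ) * W * (1 - M)) * C := e1
      _ = Cᵀ * ((1 + Mᵀ) * W * (1 + M) + (D + D)) * C := by rw [hinner]
      _ = Cᵀ * ((1 + Mᵀ) * W * (1 + M)) * C + E := by
          rw [hEdef, Matrix.mul_add, Matrix.add_mul]
      _ = Aᵀ * W * A + E := by
          congr 1
          rw [hAt, hAdef]
          simp only [Matrix.mul_assoc]
  -- spectrum of A is inside the open unit disc
  have hAspec : ∀ μ ∈ spectrum ℂ (A.map (Complex.ofReal ·)), ‖μ‖₊ < 1 := by
    intro μ hμ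
    set Mc := M.map (Complex.ofReal ·) with hMc
    set Ac := A.map (Complex.ofReal ·) with hAcd
    have hMc1 : Ac * (1 - Mc) = 1 + Mc := by
      have hreal : A * (1 - M) = 1 + M := by
        calc A * (1 - M) = (1 + M) * (C * (1 - M)) := by
              rw [hAdef]; simp only [Matrix.mul_assoc]
          _ = 1 + M := by rw [hC2, Matrix.mul_one]
      have := congrArg (Complex.ofRealHom.mapMatrix) hreal
      rw [_root_.map_mul, _root_.map_sub, _root_.map_add, _root_.map_one] at this
      rw [hAcd, hMc, hmapc, hmapc]
      exact this
    have hdetA : (μ • 1 - Ac).det = 0 := (mem_spec_iff_det _ _).1 hμ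
    have hfac : (μ • 1 - Ac) * (1 - Mc) = (μ - 1) • 1 - (μ + 1) • Mc := by
      rw [Matrix.sub_mul, hMc1, Matrix.smul_mul, Matrix.one_mul]
      rw [smul_sub, sub_smul, add_smul, one_smul]
      simp only [← hMc, one_smul]
      abel
    have hdet2 : ((μ - 1) • (1 : Matrix (Fin n) (Fin n) ℂ) - (μ + 1) • Mc).det = 0 := by
      rw [← hfac, Matrix.det_mul, hdetA, zero_mul]
    by_cases hμ1 : μ = -1
    · exfalso
      subst hμ1
      rw [show (-1 : ℂ) - 1 = -2 by norm_num, show (-1 : ℂ) + 1 = 0 by norm_num,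
        zero_smul, sub_zero, Matrix.det_smul, Matrix.det_one, mul_one] at hdet2
      exact (pow_ne_zero _ (by norm_num : (-2 : ℂ) ≠ 0)) hdet2
    · have hμ1' : μ + 1 ≠ 0 := fun h => hμ1 (eq_neg_of_add_eq_zero_left h)
      set ν := (μ - 1) / (μ + 1) with hν
      have hfac2 : (μ - 1) • (1 : Matrix (Fin n) (Fin n) ℂ) - (μ + 1) • Mc
          = (μ + 1) • (ν • 1 - Mc) := by
        rw [smul_sub, smul_smul, hν, mul_div_cancel₀ _ hμ1']
      have hdet3 : (ν • (1 : Matrix (Fin n) (Fin n) ℂ) - Mc).det = 0 := by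
        rw [hfac2, Matrix.det_smul] at hdet2
        exact (mul_eq_zero.mp hdet2).resolve_left (pow_ne_zero _ hμ1')
      have hνre : ν.re < 0 := hM ν ((mem_spec_iff_det _ _).2 hdet3)
      have hns : 0 < Complex.normSq (μ + 1) := Complex.normSq_pos.2 hμ1'
      have hreν : ν.re = ((μ.re - 1) * (μ.re + 1) + μ.im * μ.im) / Complex.normSq (μ + 1) := by
        rw [hν, Complex.div_re]
        simp [Complex.normSq_apply, Complex.sub_re, Complex.sub_im, Complex.add_re,
          Complex.add_im, Complex.one_re, Complex.one_im]
        ring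
      have hnum : (μ.re - 1) * (μ.re + 1) + μ.im * μ.im < 0 := by
        by_contra hcon
        push_neg at hcon
        have := div_nonneg hcon hns.le
        rw [← hreν] at this
        linarith
      have habs : ‖μ‖ < 1 := by
        have h2 : μ.re * μ.re + μ.im * μ.im < 1 := by nlinarith
        have h3 : ‖μ‖ ^ 2 = μ.re * μ.re + μ.im * μ.im := by
          rw [Complex.sq_norm, Complex.normSq_apply]
        nlinarith [norm_nonneg μ]
      exact_mod_cast habs
  have hAc := pow_entry_tendsto_real A hAspec
  -- symmetry of W
  have hDt : Dᵀ = D := by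
    ext i j
    conv_rhs => rw [← hD.1]
    simp [Matrix.conjTranspose_apply]
  have hEt : Eᵀ = E := by
    rw [hEdef, Matrix.transpose_mul, Matrix.transpose_mul, Matrix.transpose_add, hDt,
      Matrix.transpose_transpose, Matrix.mul_assoc]
  have hiter : ∀ N : ℕ, W = (A ^ N)ᵀ * W * A ^ N
      + ∑ k ∈ Finset.range N, (A ^ k)ᵀ * E * A ^ k := by
    intro N
    induction N with
    | zero => simp
    | succ N ih =>
      rw [Finset.sum_range_succ]
      calc W = (A ^ N)ᵀ * W * A ^ N + ∑ k ∈ Finset.range N, (A ^ k)ᵀ * E * A ^ k := ih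
        _ = (A ^ N)ᵀ * (Aᵀ * W * A + E) * A ^ N
            + ∑ k ∈ Finset.range N, (A ^ k)ᵀ * E * A ^ k := by rw [← hlyap]
        _ = ((A ^ (N + 1))ᵀ * W * A ^ (N + 1) + (A ^ N)ᵀ * E * A ^ N)
            + ∑ k ∈ Finset.range N, (A ^ k)ᵀ * E * A ^ k := by
            rw [conj_step]
        _ = (A ^ (N + 1))ᵀ * W * A ^ (N + 1)
            + (∑ k ∈ Finset.range N, (A ^ k)ᵀ * E * A ^ k + (A ^ N)ᵀ * E * A ^ N) := by abel
  have hTentry : ∀ p q : Fin n,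
      Tendsto (fun N : ℕ => ((A ^ N)ᵀ * W * (A ^ N)) p q) atTop (𝓝 0) := by
    intro p q
    have hrw : ∀ N : ℕ, ((A ^ N)ᵀ * W * (A ^ N)) p q
        = ∑ l, (∑ k, (A ^ N) k p * W k l) * (A ^ N) l q := fun N =>
      entry_formula (A ^ N) W p q
    have h0 : Tendsto (fun N : ℕ => ∑ l, (∑ k, (A ^ N) k p * W k l) * (A ^ N) l q)
        atTop (𝓝 (∑ l : Fin n, (∑ k : Fin n, 0 * W k l) * 0)) := by
      apply tendsto_finset_sum
      intro l _
      exact ((tendsto_finset_sum _ fun k _ => (hAc k p).mul tendsto_const_nhds).mul (hAc l q))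
    simp only [zero_mul, mul_zero, Finset.sum_const_zero] at h0
    exact h0.congr fun N => (hrw N).symm
  have hWsym : Wᵀ = W := by
    ext i j
    rw [Matrix.transpose_apply]
    have hS : ∀ N, (∑ k ∈ Finset.range N, (A ^ k)ᵀ * E * A ^ k) j i
        = (∑ k ∈ Finset.range N, (A ^ k)ᵀ * E * A ^ k) i j := by
      intro N
      have hsymS : (∑ k ∈ Finset.range N, (A ^ k)ᵀ * E * A ^ k)ᵀ
          = ∑ k ∈ Finset.range N, (A ^ k)ᵀ * E * A ^ k := by
        rw [Matrix.transpose_sum]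
        exact Finset.sum_congr rfl fun k _ => conj_sym (A ^ k) E hEt
      exact congrFun (congrFun hsymS i) j
    have h1 : ∀ N : ℕ, W j i - W i j
        = ((A ^ N)ᵀ * W * A ^ N) j i - ((A ^ N)ᵀ * W * A ^ N) i j := by
      intro N
      have e1 := congrFun (congrFun (hiter N) j) i
      have e2 := congrFun (congrFun (hiter N) i) j
      simp only [Matrix.add_apply] at e1 e2
      rw [e1, e2, hS N]
      ring
    have hconst : Tendsto (fun _ : ℕ => W j i - W i j) atTop (𝓝 0) := by
      have := (hTentry j i).sub (hTentry i j)
      rw [sub_zero] at this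
      exact this.congr fun N => (h1 N).symm
    have := tendsto_nhds_unique hconst tendsto_const_nhds
    linarith [this]
  have hWherm : W.IsHermitian := by
    ext i j
    rw [Matrix.conjTranspose_apply, star_trivial]
    exact congrFun (congrFun hWsym i) j
  -- positive definiteness
  have hq : ∀ v : Fin n → ℝ, v ⬝ᵥ W *ᵥ v
      = (A *ᵥ v) ⬝ᵥ W *ᵥ (A *ᵥ v) + (C *ᵥ v) ⬝ᵥ ((D + D) *ᵥ (C *ᵥ v)) := by
    intro v
    conv_lhs => rw [hlyap]
    rw [Matrix.add_mulVec, dotProduct_add]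
    congr 1
    · rw [← Matrix.mulVec_mulVec, ← Matrix.mulVec_mulVec,
        Matrix.dotProduct_mulVec v Aᵀ, Matrix.vecMul_transpose]
    · rw [hEdef, ← Matrix.mulVec_mulVec, ← Matrix.mulVec_mulVec,
        Matrix.dotProduct_mulVec v Cᵀ, Matrix.vecMul_transpose]
  have hiterq : ∀ (x : Fin n → ℝ) (N : ℕ), x ⬝ᵥ W *ᵥ x
      = (A ^ N *ᵥ x) ⬝ᵥ W *ᵥ (A ^ N *ᵥ x)
      + ∑ k ∈ Finset.range N, (C *ᵥ (A ^ k *ᵥ x)) ⬝ᵥ ((D + D) *ᵥ (C *ᵥ (A ^ k *ᵥ x))) := by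
    intro x N
    induction N with
    | zero => simp [Matrix.one_mulVec]
    | succ N ih =>
      rw [ih, Finset.sum_range_succ, hq (A ^ N *ᵥ x), Matrix.mulVec_mulVec, ← pow_succ']
      ring
  have hWpd : W.PosDef := by
    refine Matrix.PosDef.of_dotProduct_mulVec_pos hWherm fun x hx => ?_
    have hCx : C *ᵥ x ≠ 0 := by
      intro h0
      apply hx
      have hxr : (1 - M) *ᵥ (C *ᵥ x) = x := by
        rw [Matrix.mulVec_mulVec, hC1, Matrix.one_mulVec]
      rw [h0, Matrix.mulVec_zero] at hxr
      exact hxr.symm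
    set c0 := (C *ᵥ x) ⬝ᵥ ((D + D) *ᵥ (C *ᵥ x)) with hc0
    have hterm : ∀ v : Fin n → ℝ, v ⬝ᵥ ((D + D) *ᵥ v) = v ⬝ᵥ (D *ᵥ v) + v ⬝ᵥ (D *ᵥ v) := by
      intro v
      rw [Matrix.add_mulVec, dotProduct_add]
    have hc0pos : 0 < c0 := by
      have h1 := hD.dotProduct_mulVec_pos hCx
      rw [star_trivial] at h1
      rw [hc0, hterm]
      linarith
    have htermnn : ∀ k : ℕ, 0 ≤ (C *ᵥ (A ^ k *ᵥ x)) ⬝ᵥ ((D + D) *ᵥ (C *ᵥ (A ^ k *ᵥ x))) := by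
      intro k
      have h1 := hD.posSemidef.dotProduct_mulVec_nonneg (C *ᵥ (A ^ k *ᵥ x))
      rw [star_trivial] at h1
      rw [hterm]
      linarith
    have hge : ∀ N : ℕ, 1 ≤ N → c0 + (A ^ N *ᵥ x) ⬝ᵥ W *ᵥ (A ^ N *ᵥ x) ≤ x ⬝ᵥ W *ᵥ x := by
      intro N hN
      rw [hiterq x N]
      have hle : c0 ≤ ∑ k ∈ Finset.range N,
          (C *ᵥ (A ^ k *ᵥ x)) ⬝ᵥ ((D + D) *ᵥ (C *ᵥ (A ^ k *ᵥ x))) := by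
        have h5 := Finset.single_le_sum
          (f := fun k => (C *ᵥ (A ^ k *ᵥ x)) ⬝ᵥ ((D + D) *ᵥ (C *ᵥ (A ^ k *ᵥ x))))
          (fun k _ => htermnn k) (Finset.mem_range.2 hN)
        simp only [pow_zero, Matrix.one_mulVec] at h5
        exact h5
      linarith
    have hTlim : Tendsto (fun N : ℕ => (A ^ N *ᵥ x) ⬝ᵥ W *ᵥ (A ^ N *ᵥ x)) atTop (𝓝 0) := by
      have hrw : ∀ N, (A ^ N *ᵥ x) ⬝ᵥ W *ᵥ (A ^ N *ᵥ x)
          = ∑ p, (∑ q, (A ^ N) p q * x q) * (∑ l, W p l * ∑ q, (A ^ N) l q * x q) := by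
        intro N
        simp [dotProduct, Matrix.mulVec, Matrix.mul_apply]
      have h0 : Tendsto (fun N : ℕ => ∑ p, (∑ q, (A ^ N) p q * x q)
          * (∑ l, W p l * ∑ q, (A ^ N) l q * x q)) atTop
          (𝓝 (∑ p : Fin n, (∑ q : Fin n, 0 * x q) * (∑ l : Fin n, W p l * ∑ q : Fin n, 0 * x q))) := by
        apply tendsto_finset_sum
        intro p _
        refine Tendsto.mul (tendsto_finset_sum _ fun q _ => (hAc p q).mul tendsto_const_nhds) ?_
        exact tendsto_finset_sum _ fun l _ => tendsto_const_nhds.mul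
          (tendsto_finset_sum _ fun q _ => (hAc l q).mul tendsto_const_nhds)
      simp only [zero_mul, Finset.sum_const_zero, mul_zero] at h0
      exact h0.congr fun N => (hrw N).symm
    have hlim2 : Tendsto (fun N : ℕ => c0 + (A ^ N *ᵥ x) ⬝ᵥ W *ᵥ (A ^ N *ᵥ x)) atTop (𝓝 (c0 + 0)) :=
      tendsto_const_nhds.add hTlim
    have hfin : c0 + 0 ≤ x ⬝ᵥ W *ᵥ x :=
      le_of_tendsto hlim2 (by filter_upwards [eventually_ge_atTop 1] with N hN using hge N hN)
    rw [star_trivial]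
    linarith
  -- invertibility
  have hWdet : IsUnit W.det := hWpd.det_pos.ne'.isUnit
  have hVW : W⁻¹ * W = 1 := Matrix.nonsing_inv_mul _ hWdet
  have hWV : W * W⁻¹ = 1 := Matrix.mul_nonsing_inv _ hWdet
  refine ⟨hWpd, ?_, ?_⟩
  · have t1 : W⁻¹ * (Mᵀ * W) * W⁻¹ = W⁻¹ * Mᵀ := by
      rw [Matrix.mul_assoc, Matrix.mul_assoc, hWV, Matrix.mul_one]
    have t2 : W⁻¹ * (W * M) * W⁻¹ = M * W⁻¹ := by
      rw [← Matrix.mul_assoc, hVW, Matrix.one_mul]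
    have hexp : W⁻¹ * Mᵀ + M * W⁻¹ + W⁻¹ * D * W⁻¹
        = W⁻¹ * (Mᵀ * W + W * M + D) * W⁻¹ := by
      rw [Matrix.mul_add, Matrix.mul_add, Matrix.add_mul, Matrix.add_mul, t1, t2]
    rw [hexp, hW, Matrix.mul_zero, Matrix.zero_mul]
  · intro μ hμ
    have hreal : W * (M + W⁻¹ * D) = -(Mᵀ * W) := by
      rw [Matrix.mul_add, ← Matrix.mul_assoc, hWV, Matrix.one_mul]
      rw [eq_neg_iff_add_eq_zero]
      calc W * M + D + Mᵀ * W = Mᵀ * W + W * M + D := by abel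
        _ = 0 := hW
    set G := M + W⁻¹ * D with hG
    set Gc := G.map (Complex.ofReal ·) with hGc
    set Mc := M.map (Complex.ofReal ·) with hMc
    set Wc := W.map (Complex.ofReal ·) with hWc
    have hcx : Wc * Gc = -(Mcᵀ * Wc) := by
      have := congrArg (Complex.ofRealHom.mapMatrix) hreal
      rw [_root_.map_mul, _root_.map_neg, _root_.map_mul] at this
      rw [hGc, hMc, hWc, hmapc, hmapc, hmapc]
      have htr : (Complex.ofRealHom.mapMatrix Mᵀ) = (Complex.ofRealHom.mapMatrix M)ᵀ := by
        ext i j; simp [RingHom.mapMatrix_apply, Matrix.transpose_apply, Matrix.map_apply]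
      rw [htr] at this
      exact this
    have hdetWc : Wc.det ≠ 0 := by
      intro h0
      apply hWpd.det_pos.ne'
      have h1 : (Complex.ofRealHom W.det : ℂ) = 0 := by
        rw [RingHom.map_det]
        exact h0
      rw [Complex.ofRealHom_eq_coe, Complex.ofReal_eq_zero] at h1
      exact h1
    have hdetG : (μ • 1 - Gc).det = 0 := (mem_spec_iff_det _ _).1 hμ
    have hfac : Wc * (μ • 1 - Gc) = (μ • 1 + Mcᵀ) * Wc := by
      rw [Matrix.mul_sub, hcx, Matrix.add_mul, Matrix.mul_smul, Matrix.smul_mul,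
        Matrix.mul_one, Matrix.one_mul, sub_neg_eq_add]
    have hdet4 : (μ • (1 : Matrix (Fin n) (Fin n) ℂ) + Mcᵀ).det = 0 := by
      have := congrArg Matrix.det hfac
      rw [Matrix.det_mul, Matrix.det_mul, hdetG, mul_zero] at this
      rcases mul_eq_zero.mp this.symm with h | h
      · exact h
      · exact absurd h hdetWc
    have hdet5 : ((-μ) • (1 : Matrix (Fin n) (Fin n) ℂ) - Mc).det = 0 := by
      have h6 : μ • (1 : Matrix (Fin n) (Fin n) ℂ) + Mcᵀ = ((μ • 1 + Mc))ᵀ := by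
        rw [Matrix.transpose_add, Matrix.transpose_smul, Matrix.transpose_one]
      rw [h6, Matrix.det_transpose] at hdet4
      have h7 : (-μ) • (1 : Matrix (Fin n) (Fin n) ℂ) - Mc = -(μ • 1 + Mc) := by
        rw [neg_smul]; abel
      rw [h7, Matrix.det_neg, hdet4, mul_zero]
    have hmem : -μ ∈ spectrum ℂ Mc := (mem_spec_iff_det _ _).2 hdet5
    have := hM (-μ) hmem
    rw [Complex.neg_re] at this
    linarith
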